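/- Let U₀ be a CIR over schema {A, ?B} with A certain, and suppose R is a schema containing attributes A and ?B plus additional attributes (possibly uncertain), and F is a set of unary FDs over R in which ?B is equivalent to A. Construct U over R from U₀ by setting, for each identifier i and each attribute C ∈ R ∖ {A, ?B}, the cell U[i][C] to the fixed value U₀[i][A] (regardless of whether C is uncertain). If every FD in F has both sides in the closure class of A (i.e., every attribute of R is either equivalent to A or F mentions only attributes equivalent to A), then for every sample r₀ of U₀ with unique extension r₀⁺ to U: Pr_{U₀}(r₀) = Pr_U(r₀⁺), and r₀ satisfies {A → B, B → A} if and only if r₀⁺ satisfies F. -/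
import Mathlib


/-- The closure of a set `S` of attributes under a set `F` of unary FDs:
`b ∈ UCl F S` iff `F` implies `S → b`. -/
def UCl {Att : Type} (F : Finset (Att × Att)) (S : Set Att) : Set Att :=
  ⋂₀ {T : Set Att | S ⊆ T ∧ ∀ fd ∈ F, fd.1 ∈ T → fd.2 ∈ T}

/-- Let `U₀` be a CIR over `{A, ?B}` (`A` certain with values `Aval`, `?B`
with cell distributions `p`), let `R` be a schema containing `A` and `?B` plus further
attributes, and let `F` be a set of unary FDs over `R` in which `?B` is equivalent to `A` and
every FD has both sides in the closure class of `A`.  Construct `U` from `U₀` by copying the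
`A` column into every other attribute (deterministic point-mass cells `q`).  Then for every
sample `r₀` of `U₀` (a `B`-choice `b`), with `r₀⁺` its unique extension to `U`:
`Pr_{U₀}(r₀) = Pr_U(r₀⁺)`, and `r₀ ⊨ {A → B, B → A}` iff `r₀⁺ ⊨ F`. -/
theorem stmt15 {Att V ι : Type} [Fintype Att] [Fintype ι] [DecidableEq Att] [DecidableEq V]
    (attA attB : Att) (hAB : attA ≠ attB)
    (F : Finset (Att × Att))
    (hequiv : UCl F {attA} = UCl F {attB})
    (hcls : ∀ fd ∈ F, UCl F {fd.1} = UCl F {attA} ∧ UCl F {fd.2} = UCl F {attA})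
    (Aval : ι → V) (p : ι → V → ℝ)
    (q : ι → Att → V → ℝ)
    (hqB : ∀ i : ι, q i attB = p i)
    (hqO : ∀ (i : ι) (a : Att), a ≠ attB → ∀ w : V, q i a w = if w = Aval i then 1 else 0)
    (b : ι → V) :
    let rplus : ι → Att → V := fun i a => if a = attB then b i else Aval i
    -- the probability of the extension equals the probability of the original sample
    ((∏ i : ι, ∏ a : Att, q i a (rplus i a)) = ∏ i : ι, p i (b i))
    -- and satisfaction of the matching constraint transfers exactly
    ∧ ((∀ i j : ι, (Aval i = Aval j ↔ b i = b j))
        ↔ ∀ fd ∈ F, ∀ i j : ι,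
            rplus i fd.1 = rplus j fd.1 → rplus i fd.2 = rplus j fd.2) := by
  intro rplus
  constructor
  · apply Finset.prod_congr rfl
    intro i _
    rw [Finset.prod_eq_single attB]
    · simp [rplus, hqB]
    · intro a _ ha
      rw [hqO i a ha]
      simp [rplus, ha]
    · simp
  · constructor
    · -- forward
      intro h fd hfd i j h1
      have key : Aval i = Aval j ∧ b i = b j := by
        by_cases hc : fd.1 = attB
        · have hb : b i = b j := by simpa [rplus, hc] using h1
          exact ⟨(h i j).mpr hb, hb⟩
        · have ha : Aval i = Aval j := by simpa [rplus, hc] using h1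
          exact ⟨ha, (h i j).mp ha⟩
      by_cases hc : fd.2 = attB <;> simp [rplus, hc, key.1, key.2]
    · -- backward
      intro h i j
      set T : Set Att := {c | rplus i c = rplus j c} with hT
      have hTcl : ∀ fd ∈ F, fd.1 ∈ T → fd.2 ∈ T := fun fd hfd => h fd hfd i j
      have hAmem : attA ∈ UCl F {attA} := fun T ⟨hS, _⟩ => hS rfl
      have hBmem : attB ∈ UCl F {attB} := fun T ⟨hS, _⟩ => hS rfl
      constructor
      · intro hA
        have hAT : attA ∈ T := by simp [hT, rplus, hAB, hA]
        have : UCl F {attA} ⊆ T := Set.sInter_subset_of_mem ⟨by simpa using hAT, hTcl⟩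
        have hBT : attB ∈ T := this (hequiv ▸ hBmem)
        simpa [hT, rplus] using hBT
      · intro hb
        have hBT : attB ∈ T := by simp [hT, rplus, hb]
        have : UCl F {attB} ⊆ T := Set.sInter_subset_of_mem ⟨by simpa using hBT, hTcl⟩
        have hAT : attA ∈ T := this (hequiv ▸ hAmem)
        simpa [hT, rplus, hAB] using hAT
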